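/- Let T be a d-dimensional lattice simplex in ℝ^d with exactly one interior lattice point, with barycentric coordinates β₀,…,β_d of that point, and let I and N be disjoint subsets such that I ∪ N is a d-element subset of {0,…,d}. Let F_I = conv{p_j : j ∉ I} be the face of T defined by I. Then vol_{ℤ^d}(F_I) ≤ 1 / (|N|! · ∏_{n∈N} β_n). -/

import Mathlib

open MeasureTheory Set
open scoped ENNReal NNReal

lemma aux_int_span {k : ℕ} {x : Fin k → ℝ}
    (hx : x ∈ Submodule.span ℤ (Set.range (Pi.basisFun ℝ (Fin k)))) :
    ∃ z : Fin k → ℤ, x = fun i => (z i : ℝ) := by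
  have h := ((Pi.basisFun ℝ (Fin k)).mem_span_iff_repr_mem ℤ x).mp hx
  choose z hz using h
  exact ⟨z, by ext i; simpa [Pi.basisFun_repr] using (hz i).symm⟩

lemma aux_vol_ordered (k : ℕ) :
    volume {y : Fin k → ℝ | (∀ i j : Fin k, i ≤ j → y i ≤ y j) ∧ ∀ i, y i ∈ Set.Icc (0:ℝ) 1}
      ≤ (k.factorial : ℝ≥0∞)⁻¹ := by
  classical
  set O : Equiv.Perm (Fin k) → Set (Fin k → ℝ) := fun σ =>
    {y | (∀ i j : Fin k, i ≤ j → y (σ i) ≤ y (σ j)) ∧ ∀ i, y i ∈ Set.Icc (0:ℝ) 1} with hO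
  have hclosed : ∀ σ, IsClosed (O σ) := by
    intro σ
    have : O σ = (⋂ i, ⋂ j, {y : Fin k → ℝ | i ≤ j → y (σ i) ≤ y (σ j)}) ∩
        ⋂ i, (fun y : Fin k → ℝ => y i) ⁻¹' Set.Icc (0:ℝ) 1 := by
      ext y; simp [hO, Set.mem_iInter, forall_and]
    rw [this]
    refine IsClosed.inter (isClosed_iInter fun i => isClosed_iInter fun j => ?_)
      (isClosed_iInter fun i => isClosed_Icc.preimage (continuous_apply i))
    by_cases h : i ≤ j
    · simpa [h] using isClosed_le (continuous_apply (σ i)) (continuous_apply (σ j))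
    · simp [h]
  have hmeas : ∀ σ, MeasurableSet (O σ) := fun σ => (hclosed σ).measurableSet
  have hvol : ∀ σ, volume (O σ) = volume (O 1) := by
    intro σ
    have hT := volume_measurePreserving_piCongrLeft (fun _ : Fin k => ℝ) (σ.symm : Fin k ≃ Fin k)
    have hpre : (MeasurableEquiv.piCongrLeft (fun _ : Fin k => ℝ)
        (σ.symm : Fin k ≃ Fin k)) ⁻¹' (O 1) = O σ := by
      ext y
      have happ : ∀ i, (MeasurableEquiv.piCongrLeft (fun _ : Fin k => ℝ)
          (σ.symm : Fin k ≃ Fin k)) y i = y (σ i) := by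
        intro i
        simp [MeasurableEquiv.coe_piCongrLeft, Equiv.piCongrLeft_apply,
          Equiv.symm_symm]
      constructor
      · rintro ⟨h1, h2⟩
        refine ⟨fun i j hij => ?_, fun i => ?_⟩
        · have := h1 i j hij; simpa [happ] using this
        · have := h2 (σ.symm i); simpa [happ] using this
      · rintro ⟨h1, h2⟩
        refine ⟨fun i j hij => ?_, fun i => ?_⟩
        · simpa [happ] using h1 i j hij
        · simpa [happ] using h2 (σ i)
    rw [← hpre]
    exact hT.measure_preimage (hmeas 1).nullMeasurableSet
  have hdisj : Pairwise (Function.onFun (AEDisjoint volume) O) := by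
    intro σ τ hστ
    have hZ : volume (⋃ (p : Fin k × Fin k) (_ : p.1 ≠ p.2),
        {y : Fin k → ℝ | y p.1 = y p.2}) = 0 := by
      refine measure_iUnion_null fun p => measure_iUnion_null fun hp => ?_
      have : {y : Fin k → ℝ | y p.1 = y p.2} =
          (LinearMap.ker ((LinearMap.proj p.1 : (Fin k → ℝ) →ₗ[ℝ] ℝ) -
            LinearMap.proj p.2) : Set (Fin k → ℝ)) := by
        ext y; simp [LinearMap.mem_ker, sub_eq_zero]
      rw [this]
      refine Measure.addHaar_submodule _ _ ?_
      intro htop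
      have : (Pi.single p.1 1 : Fin k → ℝ) ∈ (⊤ : Submodule ℝ (Fin k → ℝ)) := trivial
      rw [← htop, LinearMap.mem_ker] at this
      simp [Pi.single_apply, hp, (Ne.symm hp)] at this
    refine measure_mono_null ?_ hZ
    rintro y ⟨⟨hyσ, hyI⟩, ⟨hyτ, _⟩⟩
    by_contra hy
    simp only [Set.mem_iUnion, not_exists, Set.mem_setOf_eq] at hy
    have hyinj : Function.Injective y := by
      intro i j hij
      by_contra hne
      exact hy (i, j) hne hij
    have hσmono : StrictMono (y ∘ σ) :=
      (Monotone.strictMono_of_injective (fun i j hij => hyσ i j hij)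
        (hyinj.comp σ.injective))
    have hτmono : StrictMono (y ∘ τ) :=
      (Monotone.strictMono_of_injective (fun i j hij => hyτ i j hij)
        (hyinj.comp τ.injective))
    have hrange : Set.range (y ∘ σ) = Set.range (y ∘ τ) := by
      rw [Set.range_comp, Set.range_comp, Equiv.range_eq_univ, Equiv.range_eq_univ]
    haveI : WellFoundedLT (Fin k) := inferInstance
    have heq : (y ∘ σ) = (y ∘ τ) :=
      (StrictMono.range_inj (β := Fin k) (γ := ℝ) hσmono hτmono).mp hrange
    exact hστ (Equiv.ext fun i => hyinj (congrFun heq i))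
  have hsum : ∑' σ : Equiv.Perm (Fin k), volume (O σ) = volume (⋃ σ, O σ) :=
    (measure_iUnion₀ hdisj fun σ => (hmeas σ).nullMeasurableSet).symm
  have hsub : (⋃ σ, O σ) ⊆ Set.pi Set.univ fun _ : Fin k => Set.Icc (0:ℝ) 1 := by
    rintro y hy
    obtain ⟨σ, hσ⟩ := Set.mem_iUnion.mp hy
    exact fun i _ => hσ.2 i
  have hcube : volume (Set.pi Set.univ fun _ : Fin k => Set.Icc (0:ℝ) 1) = 1 := by
    rw [volume_pi_pi]
    simp [Real.volume_Icc]
  have hle : (k.factorial : ℝ≥0∞) * volume (O 1) ≤ 1 := by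
    have h1 : ∑' σ : Equiv.Perm (Fin k), volume (O 1) ≤ 1 := by
      rw [← (tsum_congr hvol : _ = ∑' σ : Equiv.Perm (Fin k), volume (O 1))] at *
      calc ∑' σ : Equiv.Perm (Fin k), volume (O σ) = volume (⋃ σ, O σ) := hsum
        _ ≤ 1 := hcube ▸ measure_mono hsub
    rw [tsum_fintype] at h1
    simpa [Finset.sum_const, Fintype.card_perm, mul_comm] using h1
  have hfin : volume (O 1) ≤ (k.factorial : ℝ≥0∞)⁻¹ := by
    rw [ENNReal.le_inv_iff_mul_le, mul_comm]
    exact hle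
  have honef : O 1 = {y : Fin k → ℝ |
      (∀ i j : Fin k, i ≤ j → y i ≤ y j) ∧ ∀ i, y i ∈ Set.Icc (0:ℝ) 1} := by
    ext y; simp [hO]
  rw [← honef]
  exact hfin

lemma aux_vol_corner (k : ℕ) :
    volume {x : Fin k → ℝ | (∀ i, 0 ≤ x i) ∧ ∑ i, x i ≤ 1} ≤ (k.factorial : ℝ≥0∞)⁻¹ := by
  classical
  set Δ : Set (Fin k → ℝ) := {x | (∀ i, 0 ≤ x i) ∧ ∑ i, x i ≤ 1} with hΔ
  set M : Matrix (Fin k) (Fin k) ℝ := Matrix.of fun i j => if j ≤ i then (1:ℝ) else 0 with hM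
  have hdet : M.det = 1 := by
    have htri : M.BlockTriangular OrderDual.toDual := by
      intro i j hij
      have : ¬ j ≤ i := not_le.mpr hij
      simp [hM, this]
    rw [Matrix.det_of_lowerTriangular M htri]
    simp [hM]
  set Φ : (Fin k → ℝ) →ₗ[ℝ] (Fin k → ℝ) := Matrix.toLin' M with hΦ
  have hΦdet : LinearMap.det Φ = 1 := by rw [hΦ, LinearMap.det_toLin', hdet]
  have happ : ∀ (x : Fin k → ℝ) (i : Fin k), Φ x i = ∑ j, (if j ≤ i then x j else 0) := by
    intro x i
    rw [hΦ, Matrix.toLin'_apply]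
    simp [Matrix.mulVec, dotProduct, hM, ite_mul]
  have himg : volume (Φ '' Δ) = volume Δ := by
    rw [Measure.addHaar_image_linearMap, hΦdet]
    simp
  have hsub : Φ '' Δ ⊆ {y : Fin k → ℝ |
      (∀ i j : Fin k, i ≤ j → y i ≤ y j) ∧ ∀ i, y i ∈ Set.Icc (0:ℝ) 1} := by
    rintro y ⟨x, ⟨hx0, hx1⟩, rfl⟩
    refine ⟨fun i j hij => ?_, fun i => ⟨?_, ?_⟩⟩
    · rw [happ, happ]
      refine Finset.sum_le_sum fun m _ => ?_
      by_cases h1 : m ≤ i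
      · simp [h1, le_trans h1 hij]
      · by_cases h2 : m ≤ j
        · simp [h1, h2, hx0 m]
        · simp [h1, h2]
    · rw [happ]
      refine Finset.sum_nonneg fun m _ => ?_
      by_cases h : m ≤ i <;> simp [h, hx0 m]
    · rw [happ]
      refine le_trans (Finset.sum_le_sum fun m _ => ?_) hx1
      by_cases h : m ≤ i <;> simp [h, hx0 m]
  calc volume Δ = volume (Φ '' Δ) := himg.symm
    _ ≤ _ := measure_mono hsub
    _ ≤ (k.factorial : ℝ≥0∞)⁻¹ := aux_vol_ordered k


set_option maxHeartbeats 2000000 in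
theorem stmt12 (d : ℕ) (v : Fin (d + 1) → Fin d → ℤ)
    (hind : AffineIndependent ℝ (fun i => fun j => ((v i j : ℤ) : ℝ)))
    (q : Fin d → ℤ)
    (hq : (fun j => ((q j : ℤ) : ℝ)) ∈
      interior (convexHull ℝ (Set.range (fun i => fun j => ((v i j : ℤ) : ℝ)))))
    (huniq : ∀ q' : Fin d → ℤ,
      (fun j => ((q' j : ℤ) : ℝ)) ∈
        interior (convexHull ℝ (Set.range (fun i => fun j => ((v i j : ℤ) : ℝ)))) → q' = q)
    (β : Fin (d + 1) → ℝ) (hβpos : ∀ i, 0 < β i) (hβsum : ∑ i, β i = 1)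
    (hbar : (∑ i, β i • (fun j => ((v i j : ℤ) : ℝ))) = fun j => ((q j : ℤ) : ℝ))
    (I N : Finset (Fin (d + 1))) (hdisj : Disjoint I N) (hcard : (I ∪ N).card = d)
    (F : Set (Fin d → ℝ))
    (hF : F = convexHull ℝ ((fun i => fun j => ((v i j : ℤ) : ℝ)) '' {i | i ∉ I}))
    (k : ℕ) (hk : k = d - I.card) :
    ∀ b : Fin k → (Fin d → ℝ),
      Submodule.span ℝ (Set.range b) = vectorSpan ℝ F →
      LinearIndependent ℝ b →
      (∀ m, ∃ z : Fin d → ℤ, b m = fun j => ((z j : ℤ) : ℝ)) →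
      (∀ z : Fin d → ℤ,
        (fun j => ((z j : ℤ) : ℝ)) ∈ Submodule.span ℝ (Set.range b) →
          ∃ c : Fin k → ℤ, (fun j => ((z j : ℤ) : ℝ)) = ∑ m, (c m : ℝ) • b m) →
      μH[(k : ℝ)] F ≤
        ENNReal.ofReal (1 / ((N.card.factorial : ℝ) * ∏ n ∈ N, β n)) *
          μH[(k : ℝ)] (parallelepiped b) := by
  classical
  intro b hspan hlin hbint hbz
  set p : Fin (d + 1) → Fin d → ℝ := fun i => fun j => ((v i j : ℤ) : ℝ) with hp
  -- the unique vertex outside `I ∪ N`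
  have hcompl : (I ∪ N)ᶜ.card = 1 := by
    rw [Finset.card_compl, hcard]
    simp
  obtain ⟨a, ha⟩ := Finset.card_eq_one.mp hcompl
  have hmem_a : ∀ i : Fin (d + 1), i ∉ I ∪ N ↔ i = a := by
    intro i
    rw [← Finset.mem_compl, ha, Finset.mem_singleton]
  have haIN : a ∉ I ∪ N := (hmem_a a).mpr rfl
  have haI : a ∉ I := fun h => haIN (Finset.mem_union_left _ h)
  have haN : a ∉ N := fun h => haIN (Finset.mem_union_right _ h)
  have hNk : N.card = k := by
    have h1 : (I ∪ N).card = I.card + N.card := Finset.card_union_of_disjoint hdisj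
    have h2 : I.card ≤ d := by omega
    omega
  set g : Fin k ↪o Fin (d + 1) := N.orderEmbOfFin hNk with hg
  have hgN : ∀ m, (g m : Fin (d + 1)) ∈ N := fun m => Finset.orderEmbOfFin_mem N hNk m
  have hgI : ∀ m, (g m : Fin (d + 1)) ∉ I := fun m h =>
    (Finset.disjoint_left.mp hdisj h) (hgN m)
  have hga : ∀ m, (g m : Fin (d + 1)) ≠ a := fun m h => haN (h ▸ hgN m)
  set β' : Fin k → ℝ := fun m => β (g m) with hβ'
  have hβ'pos : ∀ m, 0 < β' m := fun m => hβpos _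
  have hprodβ : ∏ n ∈ N, β n = ∏ m : Fin k, β' m := by
    rw [hβ']
    have himg : N = Finset.image (fun m => (g m : Fin (d+1))) Finset.univ := by
      ext x
      simp only [Finset.mem_image, Finset.mem_univ, true_and]
      constructor
      · intro hx
        have : x ∈ Set.range (g : Fin k → Fin (d+1)) := by
          rw [Finset.range_orderEmbOfFin]; exact hx
        obtain ⟨m, hm⟩ := this
        exact ⟨m, hm⟩
      · rintro ⟨m, rfl⟩; exact hgN m
    rw [himg, Finset.prod_image (fun x _ y _ h => g.injective h)]
  -- the linear parametrization of the span of b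
  set L : (Fin k → ℝ) →ₗ[ℝ] (Fin d → ℝ) := Fintype.linearCombination ℝ b with hL
  have hLapp : ∀ c : Fin k → ℝ, L c = ∑ m, c m • b m := fun c => rfl
  have hLinj : Function.Injective L := by
    intro x y hxy
    have h0 : L (x - y) = 0 := by rw [map_sub, hxy, sub_self]
    rw [hLapp] at h0
    have := Fintype.linearIndependent_iff.mp hlin (x - y) (by simpa using h0)
    funext i
    have := this i
    simp only [Pi.sub_apply, sub_eq_zero] at this
    exact this
  have hLemb : MeasurableEmbedding L :=
    (LinearMap.isClosedEmbedding_of_injective (LinearMap.ker_eq_bot.mpr hLinj)).measurableEmbedding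
  set ν : Measure (Fin k → ℝ) := Measure.comap L μH[(k : ℝ)] with hνdef
  have hν : ∀ s : Set (Fin k → ℝ), MeasurableSet s → ν s = μH[(k : ℝ)] (L '' s) := by
    intro s hs
    rw [hνdef]
    exact Measure.comap_apply L hLinj (fun t ht => hLemb.measurableSet_image.mpr ht) _ hs
  have hμk : (μH[(k : ℝ)] : Measure (Fin k → ℝ)) = volume := by
    have := hausdorffMeasure_pi_real (ι := Fin k)
    simpa using this
  -- translation invariance of ν
  have hisom : ∀ c : Fin d → ℝ, Isometry (fun y : Fin d → ℝ => c + y) :=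
    fun c => Isometry.of_dist_eq fun x y => dist_add_left c x y
  haveI hνinv : ν.IsAddLeftInvariant := by
    refine ⟨fun c => ?_⟩
    ext s hs
    rw [Measure.map_apply (measurable_const_add c) hs]
    have hps : MeasurableSet ((fun x => c + x) ⁻¹' s) := (measurable_const_add c) hs
    rw [hν _ hps, hν _ hs]
    have himg : L '' ((fun x => c + x) ⁻¹' s) = (fun y => -(L c) + y) '' (L '' s) := by
      ext y
      constructor
      · rintro ⟨x, hx, rfl⟩
        exact ⟨L (c + x), ⟨c + x, hx, rfl⟩, by simp [map_add]⟩
      · rintro ⟨-, ⟨z, hz, rfl⟩, rfl⟩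
        refine ⟨z - c, by simpa using hz, by simp [map_sub, sub_eq_neg_add]⟩
    rw [himg, (hisom (-(L c))).hausdorffMeasure_image
      (Or.inl (by positivity : (0:ℝ) ≤ (k:ℝ)))]
  haveI hνfin : IsFiniteMeasureOnCompacts ν := by
    constructor
    intro K hK
    rw [hν _ hK.measurableSet]
    have hlip : LipschitzWith ‖LinearMap.toContinuousLinearMap L‖₊ L :=
      (LinearMap.toContinuousLinearMap L).lipschitz
    calc μH[(k : ℝ)] (L '' K)
        ≤ (‖LinearMap.toContinuousLinearMap L‖₊ : ℝ≥0∞) ^ (k:ℝ) * μH[(k : ℝ)] K :=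
          hlip.hausdorffMeasure_image_le (by positivity) K
      _ < ⊤ := by
          rw [hμk]
          exact ENNReal.mul_lt_top
            (ENNReal.rpow_lt_top_of_nonneg (by positivity) ENNReal.coe_ne_top)
            hK.measure_lt_top
  have hsmul : ν = Measure.addHaarScalarFactor ν volume • volume :=
    Measure.isAddLeftInvariant_eq_smul ν volume
  set c₀ : ℝ≥0 := Measure.addHaarScalarFactor ν volume with hc₀
  -- the integer vertex differences
  have hvs : vectorSpan ℝ F = vectorSpan ℝ (p '' {i | i ∉ I}) := by
    rw [hF, ← direction_affineSpan, ← direction_affineSpan, affineSpan_convexHull]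
  have hPmem : ∀ i : Fin (d + 1), i ∉ I → p i ∈ p '' {i | i ∉ I} := fun i hi => ⟨i, hi, rfl⟩
  have hdiff : ∀ m, p (g m) - p a ∈ Submodule.span ℝ (Set.range b) := by
    intro m
    rw [hspan, hvs]
    have := vsub_mem_vectorSpan ℝ (hPmem _ (hgI m)) (hPmem a haI)
    simpa using this
  have hz : ∀ m, ∃ c : Fin k → ℤ, p (g m) - p a = ∑ i, (c i : ℝ) • b i := by
    intro m
    have hcast : (fun j => ((v (g m) j - v a j : ℤ) : ℝ)) = p (g m) - p a := by
      funext j; push_cast; simp [hp]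
    obtain ⟨c, hc⟩ := hbz (fun j => v (g m) j - v a j) (by rw [hcast]; exact hdiff m)
    exact ⟨c, by rw [← hc, hcast]⟩
  choose cz hcz using hz
  set C : Fin k → Fin k → ℝ := fun m i => (cz m i : ℝ) with hC
  have hLC : ∀ m, L (C m) = p (g m) - p a := fun m => by
    rw [hLapp]; exact (hcz m).symm
  -- decomposition of F
  set S : Set (Fin k → ℝ) := convexHull ℝ ({0} ∪ Set.range C) with hS
  have hSmeas : MeasurableSet S := by
    have : IsCompact S :=
      ((Set.finite_singleton (0 : Fin k → ℝ)).union (Set.finite_range C)).isCompact_convexHull (𝕜 := ℝ)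
    exact this.measurableSet
  have hIc : {i : Fin (d + 1) | i ∉ I} = insert a (↑N : Set (Fin (d + 1))) := by
    ext i
    simp only [Set.mem_setOf_eq, Set.mem_insert_iff, Finset.mem_coe]
    constructor
    · intro hi
      by_cases hiN : i ∈ N
      · exact Or.inr hiN
      · exact Or.inl ((hmem_a i).mp (by simp [hi, hiN]))
    · rintro (rfl | hiN)
      · exact haI
      · exact fun h => (Finset.disjoint_left.mp hdisj h) hiN
  have hFeq : F = (fun x => p a + x) '' (L '' S) := by
    rw [hS, LinearMap.image_convexHull]
    have h1 : L '' ({0} ∪ Set.range C) =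
        {0} ∪ Set.range (fun m => p (g m) - p a) := by
      rw [Set.image_union, Set.image_singleton, map_zero, ← Set.range_comp]
      congr 1
      ext y
      constructor
      · rintro ⟨m, rfl⟩; exact ⟨m, (hLC m).symm⟩
      · rintro ⟨m, rfl⟩; exact ⟨m, hLC m⟩
    rw [h1]
    have h2 : (fun x => p a + x) '' convexHull ℝ ({0} ∪ Set.range (fun m => p (g m) - p a)) =
        convexHull ℝ ((fun x => p a + x) '' ({0} ∪ Set.range (fun m => p (g m) - p a))) :=
      (AffineEquiv.constVAdd ℝ (Fin d → ℝ) (p a)).toAffineMap.image_convexHull _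
    rw [h2]
    have h3 : (fun x => p a + x) '' ({0} ∪ Set.range (fun m => p (g m) - p a)) =
        p '' {i | i ∉ I} := by
      rw [Set.image_union, Set.image_singleton, add_zero, ← Set.range_comp, hIc,
        Set.image_insert_eq]
      congr 1
      have : (↑N : Set (Fin (d+1))) = Set.range (g : Fin k → Fin (d+1)) :=
        (Finset.range_orderEmbOfFin N hNk).symm
      rw [this, ← Set.range_comp]
      ext y
      constructor
      · rintro ⟨m, rfl⟩
        exact ⟨m, by simp⟩
      · rintro ⟨m, rfl⟩
        exact ⟨m, by simp⟩
    rw [h3, hF]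
  have hmF : μH[(k : ℝ)] F = ν S := by
    rw [hFeq, (hisom (p a)).hausdorffMeasure_image (Or.inl (by positivity : (0:ℝ) ≤ (k:ℝ))),
      hν S hSmeas]
  have hpar : parallelepiped b = L '' (Set.Icc 0 1) := by
    have : (fun (t : Fin k → ℝ) => ∑ i, t i • b i) = L := by
      funext t; rw [hLapp]
    rw [parallelepiped, this]
  have hmpar : μH[(k : ℝ)] (parallelepiped b) = (c₀ : ℝ≥0∞) := by
    rw [hpar, ← hν _ measurableSet_Icc, hsmul]
    simp only [Measure.smul_apply, smul_eq_mul]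
    rw [Real.volume_Icc_pi]
    simp [ENNReal.smul_def]
  -- matrix with columns C
  choose zb hzb using hbint
  have hprodpos : 0 < ∏ m : Fin k, β' m := Finset.prod_pos fun m _ => hβ'pos m
  set M : Matrix (Fin k) (Fin k) ℝ := Matrix.of fun i j => C j i with hM
  set Φ : (Fin k → ℝ) →ₗ[ℝ] (Fin k → ℝ) := Matrix.toLin' M with hΦ
  have hΦapp : ∀ x : Fin k → ℝ, Φ x = ∑ j, x j • C j := by
    intro x
    funext i
    rw [hΦ, Matrix.toLin'_apply]
    simp only [Matrix.mulVec, dotProduct, hM, Matrix.of_apply, Finset.sum_apply,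
      Pi.smul_apply, smul_eq_mul]
    exact Finset.sum_congr rfl fun j _ => mul_comm _ _
  have hΦsingle : ∀ m, Φ (Pi.single m 1) = C m := by
    intro m
    rw [hΦapp, Finset.sum_eq_single m]
    · simp
    · intro j _ hj
      rw [Pi.single_eq_of_ne hj, zero_smul]
    · intro h
      exact absurd (Finset.mem_univ m) h
  set Δ : Set (Fin k → ℝ) :=
    convexHull ℝ ({0} ∪ Set.range (fun m : Fin k => (Pi.single m 1 : Fin k → ℝ))) with hΔ
  have hSΦ : S = Φ '' Δ := by
    rw [hΔ, LinearMap.image_convexHull, hS]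
    congr 1
    rw [Set.image_union, Set.image_singleton, map_zero, ← Set.range_comp]
    have hcomp : (⇑Φ ∘ fun m : Fin k => (Pi.single m 1 : Fin k → ℝ)) = C :=
      funext fun m => hΦsingle m
    rw [hcomp]
  have hvolS : volume S = ENNReal.ofReal |M.det| * volume Δ := by
    rw [hSΦ, hΦ, Measure.addHaar_image_linearMap, LinearMap.det_toLin']
  have hΔsub : Δ ⊆ {x : Fin k → ℝ | (∀ i, 0 ≤ x i) ∧ ∑ i, x i ≤ 1} := by
    rw [hΔ]
    refine convexHull_min ?_ ?_
    · rintro x (hx | ⟨m, rfl⟩)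
      · rw [Set.mem_singleton_iff] at hx
        subst hx
        exact ⟨fun i => le_refl 0, by simp⟩
      · refine ⟨fun i => ?_, ?_⟩
        · simp only [Pi.single_apply]
          by_cases h : i = m <;> simp [h]
        · rw [Finset.sum_pi_single']
          simp
    · rintro x ⟨hx0, hx1⟩ y ⟨hy0, hy1⟩ sc tc hsc htc hst
      refine ⟨fun i => ?_, ?_⟩
      · have := hx0 i; have := hy0 i
        simp only [Pi.add_apply, Pi.smul_apply, smul_eq_mul]
        positivity
      · simp only [Pi.add_apply, Pi.smul_apply, smul_eq_mul]
        rw [Finset.sum_add_distrib, ← Finset.mul_sum, ← Finset.mul_sum]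
        nlinarith
  have hvolΔ : volume Δ ≤ ((k.factorial : ℝ≥0∞))⁻¹ :=
    le_trans (measure_mono hΔsub) (aux_vol_corner k)
  -- the key inequality, via Blichfeldt and uniqueness of the interior point
  have key : |M.det| * ∏ m : Fin k, β' m ≤ 1 := by
    by_contra hgt
    push_neg at hgt
    set Mβ : Matrix (Fin k) (Fin k) ℝ := Matrix.of fun i j => β' j * M i j with hMβ
    have hdetMβ : Mβ.det = (∏ m, β' m) * M.det := Matrix.det_mul_row β' M
    set Φβ : (Fin k → ℝ) →ₗ[ℝ] (Fin k → ℝ) := Matrix.toLin' Mβ with hΦβ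
    have hΦβapp : ∀ x : Fin k → ℝ, Φβ x = ∑ j, (x j * β' j) • C j := by
      intro x
      funext i
      rw [hΦβ, Matrix.toLin'_apply]
      simp only [Matrix.mulVec, dotProduct, hMβ, hM, Matrix.of_apply, Finset.sum_apply,
        Pi.smul_apply, smul_eq_mul]
      exact Finset.sum_congr rfl fun j _ => by ring
    have hdetβ : LinearMap.det Φβ = (∏ m, β' m) * M.det := by
      rw [hΦβ, LinearMap.det_toLin', hdetMβ]
    have habs : |LinearMap.det Φβ| = (∏ m, β' m) * |M.det| := by
      rw [hdetβ, abs_mul, abs_of_pos hprodpos]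
    have hgt' : 1 < (∏ m, β' m) * |M.det| := by
      rw [mul_comm]; exact hgt
    have hMβdetne : Mβ.det ≠ 0 := by
      intro h0
      rw [hdetMβ] at h0
      have hMdet0 : M.det = 0 := by
        rcases mul_eq_zero.mp h0 with h | h
        · exact absurd h (ne_of_gt hprodpos)
        · exact h
      rw [hMdet0] at hgt'
      simp only [abs_zero, mul_zero] at hgt'
      linarith
    haveI : Invertible Mβ := Mβ.invertibleOfIsUnitDet (isUnit_iff_ne_zero.mpr hMβdetne)
    have hΦβinj : Function.Injective Φβ := by
      intro x y hxy
      have : Mβ.mulVec x = Mβ.mulVec y := by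
        rw [← Matrix.toLin'_apply, ← Matrix.toLin'_apply]
        exact hxy
      exact Matrix.mulVec_injective_of_invertible Mβ this
    have hΦβemb : MeasurableEmbedding Φβ :=
      (LinearMap.isClosedEmbedding_of_injective (LinearMap.ker_eq_bot.mpr hΦβinj)).measurableEmbedding
    set cube : Set (Fin k → ℝ) := Set.pi Set.univ fun _ : Fin k => Set.Ico (0:ℝ) 1 with hcub
    have hcubemeas : MeasurableSet cube := MeasurableSet.univ_pi fun _ => measurableSet_Ico
    set X : Set (Fin k → ℝ) := Φβ '' cube with hX
    have hXmeas : MeasurableSet X := hΦβemb.measurableSet_image.mpr hcubemeas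
    have hvolcube : volume cube = 1 := by
      rw [hcub, volume_pi_pi]
      simp [Real.volume_Ico]
    have hvolX : volume X = ENNReal.ofReal ((∏ m, β' m) * |M.det|) := by
      rw [hX, hΦβ, Measure.addHaar_image_linearMap, ← hΦβ, habs, hvolcube, mul_one]
    set Λ := (Submodule.span ℤ (Set.range (Pi.basisFun ℝ (Fin k)))).toAddSubgroup with hΛ
    haveI : Countable Λ :=
      inferInstanceAs (Countable (Submodule.span ℤ (Set.range (Pi.basisFun ℝ (Fin k)))))
    have fund := ZSpan.isAddFundamentalDomain' (Pi.basisFun ℝ (Fin k))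
      (volume : Measure (Fin k → ℝ))
    have hlt : volume (ZSpan.fundamentalDomain (Pi.basisFun ℝ (Fin k))) < volume X := by
      rw [ZSpan.fundamentalDomain_pi_basisFun, volume_pi_pi, hvolX]
      simp only [Real.volume_Ico, sub_zero, ENNReal.ofReal_one, Finset.prod_const_one]
      rw [show (1:ℝ≥0∞) = ENNReal.ofReal 1 by simp]
      exact (ENNReal.ofReal_lt_ofReal_iff (by nlinarith)).mpr hgt'
    obtain ⟨x, y, hxy, hnd⟩ :=
      exists_pair_mem_lattice_not_disjoint_vadd fund hXmeas.nullMeasurableSet hlt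
    obtain ⟨zpt, hz1, hz2⟩ := Set.not_disjoint_iff.mp hnd
    obtain ⟨u1, hu1, hz1'⟩ := hz1
    obtain ⟨u2, hu2, hz2'⟩ := hz2
    obtain ⟨t1, ht1, rfl⟩ := hu1
    obtain ⟨t2, ht2, rfl⟩ := hu2
    have hxyeq : (x : Fin k → ℝ) - (y : Fin k → ℝ) = Φβ (t2 - t1) := by
      have h0 := hz1'.trans hz2'.symm
      have h1 : (x : Fin k → ℝ) + Φβ t1 = (y : Fin k → ℝ) + Φβ t2 := by
        simpa [AddSubgroup.vadd_def] using h0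
      rw [map_sub]
      linear_combination (norm := module) h1
    have hw'mem : (x : Fin k → ℝ) - (y : Fin k → ℝ) ∈
        Submodule.span ℤ (Set.range (Pi.basisFun ℝ (Fin k))) := by
      have := Λ.sub_mem x.2 y.2
      rwa [hΛ, Submodule.mem_toAddSubgroup] at this
    have hw'ne : (x : Fin k → ℝ) - (y : Fin k → ℝ) ≠ 0 :=
      sub_ne_zero.mpr (fun h => hxy (Subtype.ext h))
    obtain ⟨wzv, hwzv⟩ := aux_int_span hw'mem
    -- the contradiction-producing core
    have main : ∀ (sv : Fin k → ℝ) (wz : Fin k → ℤ),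
        (∀ j, -1 < sv j ∧ sv j < 1) → (∑ j, sv j * β' j ≤ 0) →
        ((fun i => (wz i : ℝ)) = Φβ sv) → (∃ j, wz j ≠ 0) → False := by
      intro sv wz hsv hsum hfeq hne
      set cc : Fin k → ℝ := fun j => sv j * β' j with hccdef
      have hw'sum : (fun i => (wz i : ℝ)) = ∑ j, cc j • C j := by
        rw [hfeq, hΦβapp]
      set wd : Fin d → ℝ := L (fun i => (wz i : ℝ)) with hwd
      have hwdsum : wd = ∑ j, cc j • (p (g j) - p a) := by
        rw [hwd, hw'sum, map_sum]
        exact Finset.sum_congr rfl fun j _ => by rw [_root_.map_smul, hLC]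
      set wint : Fin d → ℤ := fun jd => ∑ m, wz m * zb m jd with hwintdef
      have hwdint : wd = fun jd => (wint jd : ℝ) := by
        funext jd
        rw [hwd, hLapp]
        simp only [Finset.sum_apply, Pi.smul_apply, smul_eq_mul, hwintdef]
        push_cast
        exact Finset.sum_congr rfl fun m _ => by rw [hzb m]
      set η : Fin (d + 1) → ℝ := fun i =>
        (∑ j, cc j * (if i = g j then 1 else 0)) - (if i = a then ∑ j, cc j else 0) with hηdef
      set γ : Fin (d + 1) → ℝ := fun i => β i + η i with hγdef
      have hηa : η a = -(∑ j, cc j) := by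
        have h0 : (∑ j, cc j * (if a = g j then 1 else 0)) = 0 :=
          Finset.sum_eq_zero fun j _ => by rw [if_neg (fun h => (hga j) h.symm), mul_zero]
        simp only [hηdef, h0]
        simp [hccdef]
      have hγa : γ a = β a - ∑ j, cc j := by
        simp only [hγdef, hηa]
        ring
      have hηg : ∀ j0, η (g j0) = cc j0 := by
        intro j0
        simp only [hηdef, if_neg (hga j0)]
        have h0 : (∑ j, cc j * (if (g j0 : Fin (d+1)) = g j then 1 else 0)) = cc j0 := by
          rw [Finset.sum_eq_single j0]
          · rw [if_pos rfl, mul_one]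
          · intro j _ hj
            rw [if_neg (fun h => hj (g.injective h.symm)), mul_zero]
          · intro h
            exact absurd (Finset.mem_univ j0) h
        rw [h0]
        ring
      have hγg : ∀ j0, γ (g j0) = β' j0 * (1 + sv j0) := by
        intro j0
        simp only [hγdef, hηg j0, hccdef]
        have hb : β (g j0) = β' j0 := rfl
        rw [hb]
        ring
      have hγo : ∀ i, i ≠ a → i ∉ N → γ i = β i := by
        intro i hia hiN
        simp only [hγdef, hηdef, if_neg hia]
        have h0 : (∑ j, cc j * (if i = g j then 1 else 0)) = 0 :=
          Finset.sum_eq_zero fun j _ => by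
            rw [if_neg (fun h => hiN (by rw [h]; exact hgN j)), mul_zero]
        rw [h0]
        ring
      have hccsum : ∑ j, cc j ≤ 0 := by
        simp only [hccdef]
        exact hsum
      have hγpos : ∀ i, 0 < γ i := by
        intro i
        by_cases hiN : i ∈ N
        · have : i ∈ Set.range (g : Fin k → Fin (d+1)) := by
            rw [Finset.range_orderEmbOfFin]
            exact hiN
          obtain ⟨j0, rfl⟩ := this
          rw [hγg j0]
          have h1 := (hsv j0).1
          have h2 := hβ'pos j0
          nlinarith
        · by_cases hia : i = a
          · subst hia
            rw [hγa]
            have := hβpos i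
            linarith
          · rw [hγo i hia hiN]
            exact hβpos i
      have hγsum : ∑ i, γ i = 1 := by
        simp only [hγdef, hηdef]
        rw [Finset.sum_add_distrib, hβsum, Finset.sum_sub_distrib]
        have h1 : ∑ i, ∑ j, cc j * (if i = g j then 1 else 0) = ∑ j, cc j := by
          rw [Finset.sum_comm]
          refine Finset.sum_congr rfl fun j _ => ?_
          rw [show (∑ i, cc j * (if i = g j then 1 else 0))
              = ∑ i, (if i = (g j : Fin (d+1)) then cc j else 0) from
            Finset.sum_congr rfl fun i _ => by by_cases h : i = (g j : Fin (d+1)) <;> simp [h]]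
          rw [Finset.sum_ite_eq' Finset.univ (g j : Fin (d+1)) (fun _ => cc j)]
          simp
        have h2 : ∑ i, (if i = a then ∑ j, cc j else 0) = ∑ j, cc j := by
          rw [Finset.sum_ite_eq' Finset.univ a (fun _ => ∑ j, cc j)]
          simp
        rw [h1, h2]
        ring
      have hηvec : ∑ i, η i • p i = wd := by
        simp only [hηdef, sub_smul]
        rw [Finset.sum_sub_distrib]
        have h1 : ∑ i, (∑ j, cc j * (if i = g j then 1 else 0)) • p i
            = ∑ j, cc j • p (g j) := by
          have hsw : ∀ i, (∑ j, cc j * (if i = g j then 1 else 0)) • p i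
              = ∑ j, (cc j * (if i = g j then 1 else 0)) • p i := fun i => Finset.sum_smul
          simp_rw [hsw]
          rw [Finset.sum_comm]
          refine Finset.sum_congr rfl fun j _ => ?_
          rw [show (∑ i, (cc j * (if i = g j then 1 else 0)) • p i)
              = ∑ i, (if i = (g j : Fin (d+1)) then cc j • p i else 0) from
            Finset.sum_congr rfl fun i _ => by by_cases h : i = (g j : Fin (d+1)) <;> simp [h]]
          rw [Finset.sum_ite_eq' Finset.univ (g j : Fin (d+1)) (fun i => cc j • p i)]
          simp
        have h2 : ∑ i, (if i = a then ∑ j, cc j else 0) • p i = (∑ j, cc j) • p a := by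
          rw [show (∑ i, (if i = a then ∑ j, cc j else 0) • p i)
              = ∑ i, (if i = a then (∑ j, cc j) • p i else 0) from
            Finset.sum_congr rfl fun i _ => by by_cases h : i = a <;> simp [h]]
          rw [Finset.sum_ite_eq' Finset.univ a (fun i => (∑ j, cc j) • p i)]
          simp
        rw [h1, h2, hwdsum]
        rw [Finset.sum_smul]
        simp_rw [smul_sub]
        rw [Finset.sum_sub_distrib]
      have hcastq : (fun jd => ((q jd : ℤ) : ℝ)) = ∑ i, β i • p i := hbar.symm
      have hq'eq : (fun jd => ((q jd + wint jd : ℤ) : ℝ)) = ∑ i, γ i • p i := by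
        have hcast : (fun jd => ((q jd + wint jd : ℤ) : ℝ))
            = (fun jd => ((q jd : ℤ) : ℝ)) + wd := by
          funext jd
          rw [hwdint]
          push_cast
          simp
        rw [hcast, hcastq, ← hηvec]
        simp only [hγdef]
        simp_rw [add_smul]
        rw [Finset.sum_add_distrib]
      set γmin : ℝ := Finset.univ.inf' Finset.univ_nonempty γ with hγminD
      set lam : ℝ := min (1/2) γmin with hlamD
      have hγminpos : 0 < γmin := by
        rw [hγminD, Finset.lt_inf'_iff]
        exact fun i _ => hγpos i
      have hlampos : 0 < lam := lt_min (by norm_num) hγminpos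
      have hlamle : ∀ i, lam ≤ γ i := fun i =>
        le_trans (min_le_right _ _) (Finset.inf'_le _ (Finset.mem_univ i))
      have hlamlt : lam < 1 := lt_of_le_of_lt (min_le_left _ _) (by norm_num)
      have hβle1 : ∀ i, β i ≤ 1 := by
        intro i
        rw [← hβsum]
        exact Finset.single_le_sum (fun i _ => (hβpos i).le) (Finset.mem_univ i)
      set wt : Fin (d+1) → ℝ := fun i => (γ i - lam * β i) / (1 - lam) with hwtD
      have hwtnn : ∀ i, 0 ≤ wt i := by
        intro i
        apply div_nonneg _ (by linarith)
        have h1 : lam * β i ≤ lam * 1 := mul_le_mul_of_nonneg_left (hβle1 i) hlampos.le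
        have := hlamle i
        linarith
      have hwtsum : ∑ i, wt i = 1 := by
        simp only [hwtD]
        rw [← Finset.sum_div, Finset.sum_sub_distrib, hγsum, ← Finset.mul_sum, hβsum, mul_one]
        exact div_self (by linarith)
      have hrmem : ∑ i, wt i • p i ∈ convexHull ℝ (Set.range p) := by
        have hcm := Finset.centerMass_mem_convexHull (Finset.univ (α := Fin (d+1)))
          (fun i _ => hwtnn i) (by rw [hwtsum]; norm_num)
          (fun i _ => Set.mem_range_self (f := p) i)
        rwa [Finset.centerMass_eq_of_sum_1 _ _ hwtsum] at hcm
      have hcombo : (fun jd => ((q jd + wint jd : ℤ) : ℝ))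
          = lam • (fun j => ((q j : ℤ) : ℝ)) + (1 - lam) • ∑ i, wt i • p i := by
        rw [hq'eq, hcastq]
        rw [Finset.smul_sum, Finset.smul_sum, ← Finset.sum_add_distrib]
        refine Finset.sum_congr rfl fun i _ => ?_
        rw [smul_smul, smul_smul, ← add_smul]
        congr 1
        simp only [hwtD]
        have h1lam : (1:ℝ) - lam ≠ 0 := by linarith
        rw [mul_comm ((1:ℝ) - lam), div_mul_cancel₀ _ h1lam]
        ring
      have hmemint : (fun jd => ((q jd + wint jd : ℤ) : ℝ))
          ∈ interior (convexHull ℝ (Set.range p)) := by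
        rw [hcombo]
        exact (convex_convexHull ℝ (Set.range p)).combo_interior_self_mem_interior
          hq hrmem hlampos (by linarith) (by ring)
      have heq := huniq (fun jd => q jd + wint jd) hmemint
      have hwint0 : ∀ jd, wint jd = 0 := by
        intro jd
        have := congrFun heq jd
        omega
      have hwz0 : ∀ j, wz j = 0 := by
        have hL0 : L (fun i => (wz i : ℝ)) = 0 := by
          rw [← hwd, hwdint]
          funext jd
          rw [hwint0 jd]
          simp
        have hzero : (fun i => (wz i : ℝ)) = 0 := by
          apply hLinj
          rw [hL0, map_zero]
        intro j
        have h0 : ((wz j : ℝ)) = 0 := by simpa using congrFun hzero j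
        exact_mod_cast h0
      obtain ⟨j, hj⟩ := hne
      exact hj (hwz0 j)
    have hbound : ∀ j, -1 < t2 j - t1 j ∧ t2 j - t1 j < 1 := by
      intro j
      have h1 : t1 j ∈ Set.Ico (0:ℝ) 1 := ht1 j (Set.mem_univ j)
      have h2 : t2 j ∈ Set.Ico (0:ℝ) 1 := ht2 j (Set.mem_univ j)
      simp only [Set.mem_Ico] at h1 h2
      constructor <;> linarith
    have hwzvne : ∃ j, wzv j ≠ 0 := by
      by_contra hall
      push_neg at hall
      apply hw'ne
      rw [hwzv]
      funext i
      simp [hall i]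
    have hfeq0 : (fun i => (wzv i : ℝ)) = Φβ (t2 - t1) := by rw [← hwzv, hxyeq]
    rcases le_total (∑ j, (t2 j - t1 j) * β' j) 0 with hc | hc
    · exact main (t2 - t1) wzv (fun j => hbound j) hc (by simpa using hfeq0) hwzvne
    · refine main (-(t2 - t1)) (-wzv) (fun j => ?_) ?_ ?_ ?_
      · have := hbound j
        constructor <;> simp only [Pi.neg_apply, Pi.sub_apply] <;> linarith [this.1, this.2]
      · have : ∑ j, (-(t2 - t1)) j * β' j = -(∑ j, (t2 j - t1 j) * β' j) := by
          rw [← Finset.sum_neg_distrib]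
          exact Finset.sum_congr rfl fun j _ => by simp [Pi.neg_apply]; ring
        rw [this]
        linarith
      · rw [map_neg, ← hfeq0]
        funext i
        simp
      · obtain ⟨j, hj⟩ := hwzvne
        exact ⟨j, by simpa using hj⟩
  -- conclusion
  have hdetle : ENNReal.ofReal |M.det| ≤ ENNReal.ofReal (1 / ∏ m : Fin k, β' m) := by
    apply ENNReal.ofReal_le_ofReal
    rw [le_div_iff₀ hprodpos]
    exact key
  have hend : volume S ≤ ENNReal.ofReal (1 / ((N.card.factorial : ℝ) * ∏ n ∈ N, β n)) := by
    rw [hvolS]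
    calc ENNReal.ofReal |M.det| * volume Δ
        ≤ ENNReal.ofReal (1 / ∏ m : Fin k, β' m) * ((k.factorial : ℝ≥0∞))⁻¹ :=
          mul_le_mul' hdetle hvolΔ
      _ = ENNReal.ofReal (1 / ((N.card.factorial : ℝ) * ∏ n ∈ N, β n)) := by
          rw [hprodβ, hNk]
          rw [show (1:ℝ) / ((k.factorial : ℝ) * ∏ m : Fin k, β' m)
            = (1 / ∏ m : Fin k, β' m) * ((k.factorial : ℝ))⁻¹ by
              field_simp]
          rw [ENNReal.ofReal_mul (by positivity)]
          congr 1
          rw [ENNReal.ofReal_inv_of_pos (by positivity), ENNReal.ofReal_natCast]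
  rw [hmF, hmpar, hsmul]
  simp only [Measure.smul_apply, ENNReal.smul_def, smul_eq_mul]
  rw [mul_comm (ENNReal.ofReal _) (c₀ : ℝ≥0∞)]
  exact mul_le_mul_right hend _
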